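/- Let g be a Lie algebra with an A₄-action as automorphisms (generators τ₁, τ₂, φ satisfying the A₄ relations), inducing the decomposition g = t ⊕ ι₀(A) ⊕ ι₁(A) ⊕ ι₂(A) where A = g₀ and ι_i = φ^i ∘ ι₀. Define ρ_i : t → gl(A) by [d, ι_i(x)] = ι_i(ρ_i(d)(x)), and define x*y on A by [ι₁(x), ι₂(y)] = ι₀(x*y). Then the map ρ(d) = (ρ₀(d), ρ₁(d), ρ₂(d)) is a Lie algebra homomorphism from t into stri(A,*). -/

import Mathlib

/-- The symmetric triality set `stri(A,*)`. -/
def striSet (F : Type*) [Field F] (A : Type*) [AddCommGroup A] [Module F A]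
    (mul : A →ₗ[F] A →ₗ[F] A) : Set (ZMod 3 → Module.End F A) :=
  {d | ∀ (i : ZMod 3) (x y : A), d i (mul x y) = mul (d (i + 1) x) y + mul x (d (i + 2) y)}

/-- The embedding `ιᵢ = φ^i ∘ ι₀` of the coordinate space `A = g₀` into `g`. -/
def iota {F : Type*} [Field F] {g : Type*} [LieRing g] [LieAlgebra F g]
    (φ : g →ₗ⁅F⁆ g) (A : Submodule F g) (i : ZMod 3) (x : A) : g :=
  (fun z => φ z)^[i.val] (x : g)

/-- For a Lie algebra `g` with `A₄`-action, coordinate algebra `A = g₀` with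
product `*` defined by `[ι₁(x), ι₂(y)] = ι₀(x*y)`, and `ρᵢ : t → gl(A)` defined
by `[d, ιᵢ(x)] = ιᵢ(ρᵢ(d)(x))`, the map `ρ = (ρ₀,ρ₁,ρ₂)` is a Lie algebra
homomorphism from `t` into `stri(A,*)`. -/
theorem stmt4 (F : Type*) [Field F] (hchar : (2 : F) ≠ 0)
    (g : Type*) [LieRing g] [LieAlgebra F g]
    (τ₁ τ₂ φ : g →ₗ⁅F⁆ g)
    (hτ₁ : ∀ x, τ₁ (τ₁ x) = x) (hτ₂ : ∀ x, τ₂ (τ₂ x) = x)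
    (hcomm : ∀ x, τ₁ (τ₂ x) = τ₂ (τ₁ x))
    (hφ3 : ∀ x, φ (φ (φ x)) = x)
    (hrel1 : ∀ x, φ (τ₁ x) = τ₂ (φ x))
    (hrel2 : ∀ x, φ (τ₂ x) = τ₁ (τ₂ (φ x)))
    (A : Submodule F g)
    (hA : A = Module.End.eigenspace (τ₁ : g →ₗ[F] g) 1 ⊓
              Module.End.eigenspace (τ₂ : g →ₗ[F] g) (-1))
    (t : Submodule F g)
    (ht : t = Module.End.eigenspace (τ₁ : g →ₗ[F] g) 1 ⊓
              Module.End.eigenspace (τ₂ : g →ₗ[F] g) 1)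
    (mul : A →ₗ[F] A →ₗ[F] A)
    (hmul : ∀ x y : A, ⁅iota φ A 1 x, iota φ A 2 y⁆ = iota φ A 0 (mul x y))
    (ρ : g →ₗ[F] (ZMod 3 → Module.End F A))
    (hρ : ∀ d ∈ t, ∀ (i : ZMod 3) (x : A), ⁅d, iota φ A i x⁆ = iota φ A i (ρ d i x)) :
    (∀ d ∈ t, ρ d ∈ striSet F A mul) ∧
      (∀ d ∈ t, ∀ e ∈ t, ρ ⁅d, e⁆ = ⁅ρ d, ρ e⁆) := by
  -- basic descriptions of iota at 0, 1, 2
  have h0 : ∀ x : A, iota φ A 0 x = (x : g) := fun x => rfl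
  have h1 : ∀ x : A, iota φ A 1 x = φ (x : g) := fun x => rfl
  have h2 : ∀ x : A, iota φ A 2 x = φ (φ (x : g)) := fun x => rfl
  have hφinj : Function.Injective (fun z : g => φ z) :=
    Function.LeftInverse.injective (g := fun x => φ (φ x)) hφ3
  -- injectivity of iota
  have hinj : ∀ i : ZMod 3, ∀ x y : A, iota φ A i x = iota φ A i y → x = y := by
    intro i x y h
    fin_cases i
    · exact Subtype.ext (by exact h)
    · exact Subtype.ext (hφinj (by exact h))
    · exact Subtype.ext (hφinj (hφinj (by exact h)))
  -- additivity / subtractivity of iota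
  have hadd : ∀ (i : ZMod 3) (x y : A), iota φ A i (x + y) = iota φ A i x + iota φ A i y := by
    intro i x y; fin_cases i
    · show ((x + y : A) : g) = (x : g) + (y : g); simp
    · show φ ((x + y : A) : g) = φ (x : g) + φ (y : g); simp
    · show φ (φ ((x + y : A) : g)) = φ (φ (x : g)) + φ (φ (y : g)); simp
  have hsub : ∀ (i : ZMod 3) (x y : A), iota φ A i (x - y) = iota φ A i x - iota φ A i y := by
    intro i x y; fin_cases i
    · show ((x - y : A) : g) = (x : g) - (y : g); simp
    · show φ ((x - y : A) : g) = φ (x : g) - φ (y : g); simp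
    · show φ (φ ((x - y : A) : g)) = φ (φ (x : g)) - φ (φ (y : g)); simp
  -- phi shifts iota
  have hshift : ∀ (i : ZMod 3) (x : A), φ (iota φ A i x) = iota φ A (i + 1) x := by
    intro i x; fin_cases i
    · rfl
    · rfl
    · show φ (φ (φ (x : g))) = (x : g); exact hφ3 _
  -- the multiplication rule for all indices
  have hmulv : ∀ (i : ZMod 3) (x y : A),
      ⁅iota φ A (i + 1) x, iota φ A (i + 2) y⁆ = iota φ A i (mul x y) := by
    intro i x y
    have key : ∀ (j : ZMod 3) (x y : A),
        ⁅iota φ A (j + 1) x, iota φ A (j + 2) y⁆ = iota φ A j (mul x y) →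
        ⁅iota φ A (j + 2) x, iota φ A (j + 3) y⁆ = iota φ A (j + 1) (mul x y) := by
      intro j x y h
      have := congrArg φ h
      rw [LieHom.map_lie, hshift, hshift, hshift] at this
      convert this using 3 <;> ring
    have k0 : ⁅iota φ A (0 + 1 : ZMod 3) x, iota φ A (0 + 2) y⁆ = iota φ A 0 (mul x y) := by
      simpa using hmul x y
    fin_cases i
    · exact k0
    · exact key 0 x y k0
    · exact key 1 x y (key 0 x y k0)
  -- bracket of elements of t lies in t
  have hmemt : ∀ z : g, z ∈ t ↔ τ₁ z = z ∧ τ₂ z = z := by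
    intro z
    subst ht
    simp [Submodule.mem_inf, Module.End.mem_eigenspace_iff]
  have hbrt : ∀ d ∈ t, ∀ e ∈ t, ⁅d, e⁆ ∈ t := by
    intro d hd e he
    rw [hmemt] at hd he ⊢
    constructor
    · rw [LieHom.map_lie, hd.1, he.1]
    · rw [LieHom.map_lie, hd.2, he.2]
  constructor
  · -- part 1 : ρ d ∈ striSet
    intro d hd i x y
    apply hinj i
    rw [← hρ d hd i (mul x y), ← hmulv i x y, leibniz_lie, hρ d hd (i + 1) x,
      hρ d hd (i + 2) y, hmulv i, hmulv i, hadd]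
  · -- part 2 : ρ is a Lie algebra homomorphism
    intro d hd e he
    funext i
    apply LinearMap.ext
    intro x
    have hde := hbrt d hd e he
    apply hinj i
    rw [show (⁅ρ d, ρ e⁆ : ZMod 3 → Module.End F A) = ρ d * ρ e - ρ e * ρ d from rfl]
    simp only [Pi.sub_apply, Pi.mul_apply, LinearMap.sub_apply, Module.End.mul_apply]
    rw [← hρ _ hde i x, lie_lie, hρ d hd, hρ e he, hρ e he, hρ d hd, hsub]
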